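/- Suppose h ∂ₓ u ∈ L²(ℝ₊) and h^{σ₁} u ∈ L²(ℝ₊) for some 0 ≤ σ₁ ≤ 1. Then u ∈ L²(ℝ₊) and ‖u‖_{L²} ≲ ‖h ∂ₓ u‖_{L²} + ‖h^{σ₁} u‖_{L²}, with implicit constant depending only on h and σ₁. -/

import Mathlib

/- STATEMENT 5 (Corollary 6.2):
Suppose `h ∂ₓ u ∈ L²(ℝ₊)` and `h^{σ₁} u ∈ L²(ℝ₊)` for some `0 ≤ σ₁ ≤ 1`.
Then `u ∈ L²(ℝ₊)` and `‖u‖_{L²} ≲ ‖h ∂ₓ u‖_{L²} + ‖h^{σ₁} u‖_{L²}`,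
with implicit constant depending only on `h` and `σ₁`. -/

open MeasureTheory Real Set Filter
open scoped ENNReal
open scoped Topology

noncomputable section

/-- The standing assumptions on the depth function `h`. -/
def ShoreFn (h : ℝ → ℝ) : Prop :=
  ContDiffOn ℝ 1 h (Ici 0) ∧ (∃ M, ∀ x ∈ Ici (0:ℝ), |h x| ≤ M) ∧
    h 0 = 0 ∧ 0 < deriv h 0 ∧ (∀ x, 0 < x → 0 < h x) ∧ 0 < Filter.atTop.liminf h

/-- quadratic absorption -/
lemma quad_absorb {F I D : ℝ} (hF : 0 ≤ F) (hD : 0 ≤ D)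
    (hineq : F ≤ 2*I + 2*(Real.sqrt F * D)) : F ≤ 4*I + 4*D^2 := by
  nlinarith [sq_nonneg (Real.sqrt F - 2*D), Real.sq_sqrt hF, Real.sqrt_nonneg F]

set_option maxHeartbeats 1000000 in
theorem hardy_L2 (h : ℝ → ℝ) (hh : ShoreFn h) (σ₁ : ℝ) (hσ₁ : 0 ≤ σ₁) (hσ₁' : σ₁ ≤ 1) :
    ∃ C : ℝ, 0 < C ∧ ∀ u : ℝ → ℝ, DifferentiableOn ℝ u (Ioi 0) →
      MemLp (fun x => h x * deriv u x) 2 (volume.restrict (Ioi 0)) →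
      MemLp (fun x => h x ^ σ₁ * u x) 2 (volume.restrict (Ioi 0)) →
      MemLp u 2 (volume.restrict (Ioi 0)) ∧
        eLpNorm u 2 (volume.restrict (Ioi 0)) ≤
          ENNReal.ofReal C *
            (eLpNorm (fun x => h x * deriv u x) 2 (volume.restrict (Ioi 0)) +
              eLpNorm (fun x => h x ^ σ₁ * u x) 2 (volume.restrict (Ioi 0))) := by
  obtain ⟨hC1, ⟨M, hM⟩, h0, hd0, hpos, hliminf⟩ := hh
  -- Step A : near 0, x ≤ c * h x
  have hdiff : DifferentiableAt ℝ h 0 := differentiableAt_of_deriv_ne_zero (ne_of_gt hd0)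
  have hslope : Tendsto (fun x => h x / x) (𝓝[>] (0:ℝ)) (𝓝 (deriv h 0)) := by
    have h1 := hasDerivAt_iff_tendsto_slope.1 hdiff.hasDerivAt
    have h2 : Tendsto (slope h 0) (𝓝[>] (0:ℝ)) (𝓝 (deriv h 0)) :=
      h1.mono_left (nhdsWithin_mono _ (fun x hx => ne_of_gt hx))
    refine h2.congr' ?_
    filter_upwards [self_mem_nhdsWithin] with x hx
    simp [slope_def_field, h0]
  have hev : ∀ᶠ x in 𝓝[>] (0:ℝ), deriv h 0 / 2 < h x / x :=
    hslope.eventually (eventually_gt_nhds (by linarith))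
  obtain ⟨δ, hδpos, hδ⟩ : ∃ δ, 0 < δ ∧ ∀ x ∈ Ioc (0:ℝ) δ, deriv h 0 / 2 < h x / x := by
    obtain ⟨δ, hδ1, hδ2⟩ := mem_nhdsGT_iff_exists_Ioc_subset.1 hev
    exact ⟨δ, hδ1, fun x hx => hδ2 hx⟩
  set c := 2 / deriv h 0 with hc
  have hcpos : 0 < c := by positivity
  have hxch : ∀ x, 0 < x → x ≤ δ → x ≤ c * h x := by
    intro x hx hxδ
    have h1 := hδ x ⟨hx, hxδ⟩
    rw [lt_div_iff₀ hx] at h1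
    rw [hc, div_mul_eq_mul_div, le_div_iff₀ hd0]
    nlinarith
  -- Step B : lower bound m on [δ/2, ∞)
  have hbdd : IsBoundedUnder (· ≥ ·) atTop h := by
    refine ⟨-M, ?_⟩
    rw [eventually_map]
    filter_upwards [eventually_ge_atTop (0:ℝ)] with x hx
    have := hM x hx
    have := abs_le.1 this
    linarith [this.1]
  have hLev : ∀ᶠ x in atTop, atTop.liminf h / 2 < h x :=
    eventually_lt_of_lt_liminf (by linarith) hbdd
  obtain ⟨A₀, hA₀⟩ := eventually_atTop.1 hLev
  set R := max A₀ δ with hR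
  have hcont : ContinuousOn h (Icc (δ/2) R) := by
    refine hC1.continuousOn.mono ?_
    intro x hx
    exact le_trans (by linarith) hx.1
  obtain ⟨x₀, hx₀mem, hx₀min⟩ := isCompact_Icc.exists_isMinOn
    (nonempty_Icc.2 (le_trans (by linarith) (le_max_right A₀ δ))) hcont
  set m := min (h x₀) (atTop.liminf h / 2) with hm_def
  have hmpos : 0 < m :=
    lt_min (hpos x₀ (lt_of_lt_of_le (by linarith) hx₀mem.1)) (by linarith)
  have hm : ∀ x, δ/2 ≤ x → m ≤ h x := by
    intro x hx
    rcases le_or_gt x R with hxR | hxR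
    · exact le_trans (min_le_left _ _) ((isMinOn_iff.1 hx₀min) x ⟨hx, hxR⟩)
    · exact le_trans (min_le_right _ _)
        (le_of_lt (hA₀ x (le_of_lt (lt_of_le_of_lt (le_max_left A₀ δ) hxR))))
  set m₃ := m ^ σ₁ with hm₃_def
  have hm₃pos : 0 < m₃ := Real.rpow_pos_of_pos hmpos σ₁
  have hm₃ : ∀ x, δ/2 ≤ x → m₃ ≤ h x ^ σ₁ :=
    fun x hx => Real.rpow_le_rpow hmpos.le (hm x hx) hσ₁
  -- the constant
  set K := 5 * m₃⁻¹^2 + 4 * c^2 with hK_def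
  have hKpos : 0 < K := by positivity
  refine ⟨Real.sqrt K, Real.sqrt_pos.2 hKpos, ?_⟩
  intro u hu hg1 hg2
  have hucont : ContinuousOn u (Ioi 0) := hu.continuousOn
  have hum : AEStronglyMeasurable u (volume.restrict (Ioi 0)) :=
    hucont.aestronglyMeasurable measurableSet_Ioi
  set Asq := ∫ x in Ioi (0:ℝ), (h x ^ σ₁ * u x)^2 with hAsq_def
  set Bsq := ∫ x in Ioi (0:ℝ), (h x * deriv u x)^2 with hBsq_def
  have hAsqint : IntegrableOn (fun x => (h x ^ σ₁ * u x)^2) (Ioi 0) volume :=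
    (memLp_two_iff_integrable_sq hg2.1).1 hg2
  have hBsqint : IntegrableOn (fun x => (h x * deriv u x)^2) (Ioi 0) volume :=
    (memLp_two_iff_integrable_sq hg1.1).1 hg1
  have hAsq0 : 0 ≤ Asq := setIntegral_nonneg measurableSet_Ioi (fun x _ => sq_nonneg _)
  have hBsq0 : 0 ≤ Bsq := setIntegral_nonneg measurableSet_Ioi (fun x _ => sq_nonneg _)
  -- pointwise comparison on [δ/2, ∞)
  have hcomp : ∀ x, δ/2 ≤ x → u x ^2 ≤ m₃⁻¹^2 * (h x ^ σ₁ * u x)^2 := by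
    intro x hx
    have h1 := hm₃ x hx
    have h2 : m₃^2 * u x^2 ≤ (h x ^ σ₁ * u x)^2 := by
      rw [mul_pow]
      exact mul_le_mul_of_nonneg_right (pow_le_pow_left₀ hm₃pos.le h1 2) (sq_nonneg _)
    have h3 : u x ^2 = m₃⁻¹^2 * (m₃^2 * u x^2) := by
      field_simp
    rw [h3]
    exact mul_le_mul_of_nonneg_left h2 (by positivity)
  -- integrability and bound on Ioi (δ/2)
  have hδ2pos : (0:ℝ) < δ/2 := by linarith
  have hrint2 : IntegrableOn (fun x => u x^2) (Ioi (δ/2)) volume := by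
    refine Integrable.mono (g := fun x => m₃⁻¹^2 * (h x ^ σ₁ * u x)^2)
      ((hAsqint.mono_set (Ioi_subset_Ioi hδ2pos.le)).const_mul _) ?_ ?_
    · exact ((hucont.mono (Ioi_subset_Ioi hδ2pos.le)).pow 2).aestronglyMeasurable measurableSet_Ioi
    · filter_upwards [ae_restrict_mem measurableSet_Ioi] with x hx
      rw [Real.norm_of_nonneg (sq_nonneg _), Real.norm_of_nonneg (by positivity)]
      exact hcomp x (le_of_lt hx)
  have hJbound : ∫ x in Ioi (δ/2), u x^2 ≤ m₃⁻¹^2 * Asq := by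
    calc ∫ x in Ioi (δ/2), u x^2
        ≤ ∫ x in Ioi (δ/2), m₃⁻¹^2 * (h x ^ σ₁ * u x)^2 := by
          refine setIntegral_mono_on hrint2
            ((hAsqint.mono_set (Ioi_subset_Ioi hδ2pos.le)).const_mul _) measurableSet_Ioi ?_
          intro x hx; exact hcomp x (le_of_lt hx)
      _ = m₃⁻¹^2 * ∫ x in Ioi (δ/2), (h x ^ σ₁ * u x)^2 := integral_const_mul _ _
      _ ≤ m₃⁻¹^2 * Asq := by
          refine mul_le_mul_of_nonneg_left ?_ (by positivity)
          refine setIntegral_mono_set hAsqint (ae_of_all _ fun x => sq_nonneg _) ?_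
          exact (Ioi_subset_Ioi hδ2pos.le).eventuallyLE
  -- minimum point y in [δ/2, δ]
  have hIccsub : Icc (δ/2) δ ⊆ Ioi (0:ℝ) := fun x hx => lt_of_lt_of_le hδ2pos hx.1
  obtain ⟨y, hymem, hymin⟩ := isCompact_Icc.exists_isMinOn
    (nonempty_Icc.2 (by linarith)) ((hucont.mono hIccsub).pow 2)
  have hy1 : δ/2 ≤ y := hymem.1
  have hy2 : y ≤ δ := hymem.2
  have hypos : 0 < y := lt_of_lt_of_le hδ2pos hy1
  set I := ∫ x in Ioc (δ/2) δ, u x^2 with hI_def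
  have hIint : IntegrableOn (fun x => u x^2) (Ioc (δ/2) δ) volume :=
    hrint2.mono_set Ioc_subset_Ioi_self
  have hI0 : 0 ≤ I := setIntegral_nonneg measurableSet_Ioc (fun x _ => sq_nonneg _)
  have hIA : I ≤ m₃⁻¹^2 * Asq := by
    refine le_trans ?_ hJbound
    refine setIntegral_mono_set hrint2 (ae_of_all _ fun x => sq_nonneg _) ?_
    exact Ioc_subset_Ioi_self.eventuallyLE
  have hyu : y * u y^2 ≤ 2*I := by
    have h1 : u y^2 * (volume (Ioc (δ/2) δ)).toReal ≤ I := by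
      refine setIntegral_ge_of_const_le_real measurableSet_Ioc measure_Ioc_lt_top.ne ?_ hIint
      intro x hx
      exact (isMinOn_iff.1 hymin) x (Ioc_subset_Icc_self hx)
    rw [Real.volume_Ioc, ENNReal.toReal_ofReal (by linarith)] at h1
    nlinarith [sq_nonneg (u y)]
  -- main estimate on Ioc ε y
  have hmain : ∀ ε, 0 < ε → ε < y →
      ∫ x in Ioc ε y, u x^2 ≤ 4*I + 4*(c^2*Bsq) := by
    intro ε hε hεy
    have hIccIoi : Icc ε y ⊆ Ioi (0:ℝ) := fun x hx => lt_of_lt_of_le hε hx.1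
    have hIocIoi : Ioc ε y ⊆ Ioi (0:ℝ) := fun x hx => lt_of_lt_of_le hε hx.1.le
    have hνle : volume.restrict (Ioc ε y) ≤ volume.restrict (Ioi 0) :=
      Measure.restrict_mono hIocIoi le_rfl
    have hg1' : MemLp (fun x => h x * deriv u x) 2 (volume.restrict (Ioc ε y)) :=
      hg1.mono_measure hνle
    have hhu'int : IntegrableOn (fun x => h x * deriv u x) (Ioc ε y) volume :=
      hg1'.integrable one_le_two
    have hhlow : ∀ x ∈ Ioc ε y, ε / c ≤ h x := by
      intro x hx
      have hx0 : 0 < x := lt_of_lt_of_le hε hx.1.le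
      have := hxch x hx0 (le_trans hx.2 hy2)
      rw [div_le_iff₀ hcpos]
      nlinarith [hx.1.le]
    have hu'int : IntegrableOn (fun x => deriv u x) (Ioc ε y) volume := by
      refine Integrable.mono (g := fun x => (c/ε) * (h x * deriv u x))
        (hhu'int.const_mul _) ((measurable_deriv u).aestronglyMeasurable) ?_
      filter_upwards [ae_restrict_mem measurableSet_Ioc] with x hx
      have hhx := hhlow x hx
      have hh0 : 0 < h x := lt_of_lt_of_le (by positivity) hhx
      rw [Real.norm_eq_abs, Real.norm_eq_abs, abs_mul, abs_mul,
        abs_of_nonneg (by positivity : (0:ℝ) ≤ c/ε), abs_of_nonneg hh0.le]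
      have h5 : ε/c * |deriv u x| ≤ h x * |deriv u x| :=
        mul_le_mul_of_nonneg_right hhx (abs_nonneg _)
      calc |deriv u x| = (c/ε) * (ε/c * |deriv u x|) := by field_simp
        _ ≤ (c/ε) * (h x * |deriv u x|) := mul_le_mul_of_nonneg_left h5 (by positivity)
    -- interval integrability
    have hu2ii : IntervalIntegrable (fun x => u x^2) volume ε y := by
      apply ContinuousOn.intervalIntegrable
      rw [uIcc_of_le hεy.le]
      exact (hucont.mono hIccIoi).pow 2
    have hu'ii : IntervalIntegrable (fun x => deriv u x) volume ε y :=
      (intervalIntegrable_iff_integrableOn_Ioc_of_le hεy.le).2 hu'int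
    have hprodii : IntervalIntegrable (fun x => x * (2 * u x) * deriv u x) volume ε y := by
      refine hu'ii.continuousOn_mul ?_
      rw [uIcc_of_le hεy.le]
      exact (continuousOn_id.mul ((continuousOn_const.mul (hucont.mono hIccIoi))))
    -- FTC
    have hftc : ∫ x in ε..y, (u x^2 + x * (2 * u x) * deriv u x) = y * u y^2 - ε * u ε^2 := by
      have := intervalIntegral.integral_eq_sub_of_hasDerivAt
        (f := fun x => x * u x^2)
        (f' := fun x => u x^2 + x * (2 * u x) * deriv u x) ?_ (hu2ii.add hprodii)
      · simpa using this
      · intro x hx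
        rw [uIcc_of_le hεy.le] at hx
        have hxpos : 0 < x := lt_of_lt_of_le hε hx.1
        have hud : HasDerivAt u (deriv u x) x :=
          (hu.differentiableAt (Ioi_mem_nhds hxpos)).hasDerivAt
        have h6 := (hasDerivAt_id x).mul (hud.pow 2)
        convert h6 using 1
        · rfl
        · rfl
        · simp
          ring
    -- Hoelder on Ioc ε y
    set ν := volume.restrict (Ioc ε y) with hν_def
    have hconj : Real.HolderConjugate 2 2 := Real.HolderConjugate.two_two
    obtain ⟨Cb, hCb⟩ := isCompact_Icc.exists_bound_of_continuousOn (hucont.mono hIccIoi)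
    have habscont : ContinuousOn (fun x => |u x|) (Ioc ε y) := (hucont.mono hIocIoi).abs
    have hfmem : MemLp (fun x => |u x|) (ENNReal.ofReal 2) ν := by
      rw [show ENNReal.ofReal 2 = 2 by norm_num]
      refine MemLp.of_bound (habscont.aestronglyMeasurable measurableSet_Ioc) Cb ?_
      filter_upwards [ae_restrict_mem measurableSet_Ioc] with x hx
      rw [Real.norm_eq_abs, abs_abs, ← Real.norm_eq_abs]
      exact hCb x (Ioc_subset_Icc_self hx)
    have hgmem : MemLp (fun x => x * |deriv u x|) (ENNReal.ofReal 2) ν := by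
      rw [show ENNReal.ofReal 2 = 2 by norm_num]
      refine MemLp.of_le (hg1'.const_mul c)
        ((measurable_id.mul (measurable_deriv u).abs).aestronglyMeasurable) ?_
      filter_upwards [ae_restrict_mem measurableSet_Ioc] with x hx
      have hx0 : 0 < x := lt_of_lt_of_le hε hx.1.le
      have hxc : x ≤ c * h x := hxch x hx0 (le_trans hx.2 hy2)
      have hh0 : 0 ≤ h x := (hpos x hx0).le
      have hn1 : ‖x * |deriv u x|‖ = x * |deriv u x| := Real.norm_of_nonneg (by positivity)
      have hn2 : ‖c * (h x * deriv u x)‖ = c * (h x * |deriv u x|) := by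
        rw [Real.norm_eq_abs, abs_mul, abs_mul, abs_of_nonneg hcpos.le, abs_of_nonneg hh0]
      rw [hn1, hn2]
      calc x * |deriv u x| ≤ c * h x * |deriv u x| :=
            mul_le_mul_of_nonneg_right hxc (abs_nonneg _)
        _ = c * (h x * |deriv u x|) := mul_assoc _ _ _
    have hholder := integral_mul_le_Lp_mul_Lq_of_nonneg hconj
      (ae_of_all _ fun x => abs_nonneg (u x))
      (f := fun x => |u x|) (g := fun x => x * |deriv u x|)
      ?_ hfmem hgmem
    rotate_left
    · filter_upwards [ae_restrict_mem measurableSet_Ioc] with x hx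
      have hx0 : 0 < x := lt_of_lt_of_le hε hx.1.le
      positivity
    set F := ∫ x in Ioc ε y, u x^2 with hF_def
    have hF0 : 0 ≤ F := setIntegral_nonneg measurableSet_Ioc (fun x _ => sq_nonneg _)
    -- identify the squares in hholder
    have heq1 : ∫ a, |u a| ^ (2:ℝ) ∂ν = F := by
      refine integral_congr_ae (ae_of_all _ fun x => ?_)
      simp only [Real.rpow_two, sq_abs]
    have hgsq_int : IntegrableOn (fun x => (x * |deriv u x|)^2) (Ioc ε y) volume := by
      exact (memLp_two_iff_integrable_sq
        ((measurable_id.mul (measurable_deriv u).abs).aestronglyMeasurable)).1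
        (by rw [show (2:ℝ≥0∞) = ENNReal.ofReal 2 by norm_num]; exact hgmem)
    have heq2 : ∫ a, (a * |deriv u a|) ^ (2:ℝ) ∂ν ≤ c^2 * Bsq := by
      have hstep : ∀ x ∈ Ioc ε y, (x * |deriv u x|)^2 ≤ c^2 * (h x * deriv u x)^2 := by
        intro x hx
        have hx0 : 0 < x := lt_of_lt_of_le hε hx.1.le
        have hxc : x ≤ c * h x := hxch x hx0 (le_trans hx.2 hy2)
        have hh0 : 0 ≤ h x := (hpos x hx0).le
        have h7 : x * |deriv u x| ≤ c * h x * |deriv u x| :=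
          mul_le_mul_of_nonneg_right hxc (abs_nonneg _)
        have h8 : 0 ≤ x * |deriv u x| := by positivity
        calc (x * |deriv u x|)^2 ≤ (c * h x * |deriv u x|)^2 := by nlinarith
          _ = c^2 * (h x * deriv u x)^2 := by
              rw [mul_pow, mul_pow, mul_pow, sq_abs]; ring
      calc ∫ a, (a * |deriv u a|) ^ (2:ℝ) ∂ν = ∫ a in Ioc ε y, (a * |deriv u a|)^2 := by
            refine integral_congr_ae (ae_of_all _ fun x => ?_)
            simp only [Real.rpow_two]
        _ ≤ ∫ a in Ioc ε y, c^2 * (h a * deriv u a)^2 := by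
            refine setIntegral_mono_on hgsq_int
              ((hBsqint.mono_set hIocIoi).const_mul _) measurableSet_Ioc hstep
        _ = c^2 * ∫ a in Ioc ε y, (h a * deriv u a)^2 := integral_const_mul _ _
        _ ≤ c^2 * Bsq := by
            refine mul_le_mul_of_nonneg_left ?_ (by positivity)
            exact setIntegral_mono_set hBsqint (ae_of_all _ fun x => sq_nonneg _)
              hIocIoi.eventuallyLE
    have hCS : ∫ a, |u a| * (a * |deriv u a|) ∂ν ≤ Real.sqrt F * (c * Real.sqrt Bsq) := by
      refine le_trans hholder ?_
      have hL : (∫ a, |u a| ^ (2:ℝ) ∂ν) ^ ((1:ℝ)/2) = Real.sqrt F := by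
        rw [heq1, Real.sqrt_eq_rpow]
      have hR : (∫ a, (a * |deriv u a|) ^ (2:ℝ) ∂ν) ^ ((1:ℝ)/2) ≤ c * Real.sqrt Bsq := by
        have h9 : (0:ℝ) ≤ ∫ a, (a * |deriv u a|) ^ (2:ℝ) ∂ν := by
          refine integral_nonneg_of_ae ?_
          filter_upwards [ae_restrict_mem measurableSet_Ioc] with x hx
          have hx0 : 0 < x := lt_of_lt_of_le hε hx.1.le
          exact Real.rpow_nonneg (by positivity) _
        calc (∫ a, (a * |deriv u a|) ^ (2:ℝ) ∂ν) ^ ((1:ℝ)/2)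
            ≤ (c^2 * Bsq) ^ ((1:ℝ)/2) := Real.rpow_le_rpow h9 heq2 (by norm_num)
          _ = c * Real.sqrt Bsq := by
              rw [← Real.sqrt_eq_rpow, Real.sqrt_mul (sq_nonneg c), Real.sqrt_sq hcpos.le]
      rw [hL]
      exact mul_le_mul_of_nonneg_left hR (Real.sqrt_nonneg F)
    -- cross term bound
    have hprodint : IntegrableOn (fun x => x * (2 * u x) * deriv u x) (Ioc ε y) volume :=
      (intervalIntegrable_iff_integrableOn_Ioc_of_le hεy.le).1 hprodii
    have hcross : |∫ x in Ioc ε y, x * (2 * u x) * deriv u x| ≤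
        2 * (Real.sqrt F * (c * Real.sqrt Bsq)) := by
      have hb1 : |∫ x in Ioc ε y, x * (2 * u x) * deriv u x| ≤
          ∫ x in Ioc ε y, |x| * (2 * |u x|) * |deriv u x| := by
        simpa using norm_integral_le_integral_norm (μ := volume.restrict (Ioc ε y))
          (fun x => x * (2 * u x) * deriv u x)
      refine le_trans hb1 ?_
      calc ∫ x in Ioc ε y, |x| * (2 * |u x|) * |deriv u x|
          = ∫ x in Ioc ε y, 2 * (|u x| * (x * |deriv u x|)) := by
            refine setIntegral_congr_fun measurableSet_Ioc fun x hx => ?_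
            have hx0 : 0 < x := lt_of_lt_of_le hε hx.1.le
            rw [abs_of_nonneg hx0.le]; ring
        _ = 2 * ∫ x in Ioc ε y, |u x| * (x * |deriv u x|) := integral_const_mul _ _
        _ ≤ 2 * (Real.sqrt F * (c * Real.sqrt Bsq)) :=
            mul_le_mul_of_nonneg_left hCS (by norm_num)
    -- put it together
    have hsplit2 : F = y * u y ^2 - ε * u ε^2 - ∫ x in Ioc ε y, x * (2 * u x) * deriv u x := by
      have h10 := hftc
      rw [intervalIntegral.integral_add hu2ii hprodii,
        intervalIntegral.integral_of_le hεy.le, intervalIntegral.integral_of_le hεy.le] at h10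
      rw [hF_def]
      linarith
    have hFle : F ≤ 2*I + 2*(Real.sqrt F * (c * Real.sqrt Bsq)) := by
      have h11 : 0 ≤ ε * u ε^2 := by positivity
      have h12 := neg_abs_le (∫ x in Ioc ε y, x * (2 * u x) * deriv u x)
      have h13 := hyu
      have h14 := abs_nonneg (∫ x in Ioc ε y, x * (2 * u x) * deriv u x)
      linarith [hsplit2, hcross, h12, h11, h13]
    have := quad_absorb hF0 (by positivity : (0:ℝ) ≤ c * Real.sqrt Bsq) hFle
    calc F ≤ 4*I + 4*(c * Real.sqrt Bsq)^2 := this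
      _ = 4*I + 4*(c^2 * Bsq) := by
          rw [mul_pow, Real.sq_sqrt hBsq0]
  -- limit ε → 0 along εₙ = y/(n+2)
  have hεn : ∀ n : ℕ, y/((n:ℝ)+2) ∈ Ioo 0 y := by
    intro n
    have hn : (0:ℝ) ≤ (n:ℝ) := Nat.cast_nonneg n
    exact ⟨by positivity, div_lt_self hypos (by linarith)⟩
  have htend : Tendsto (fun n : ℕ => y/((n:ℝ)+2)) atTop (𝓝 0) := by
    apply Tendsto.div_atTop tendsto_const_nhds
    exact tendsto_atTop_add_const_right _ 2 tendsto_natCast_atTop_atTop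
  have hintn : ∀ n : ℕ, IntegrableOn (fun x => u x^2) (Ioc (y/((n:ℝ)+2)) y) volume := by
    intro n
    refine (ContinuousOn.integrableOn_Icc ?_).mono_set Ioc_subset_Icc_self
    exact (hucont.mono (fun x hx => lt_of_lt_of_le (hεn n).1 hx.1)).pow 2
  set K₀ := 4*I + 4*(c^2*Bsq) with hK₀_def
  have hboundn : ∀ n : ℕ, (∫ x in Ioc (y/((n:ℝ)+2)) y, ‖u x^2‖) ≤ K₀ := by
    intro n
    have heq : ∫ x in Ioc (y/((n:ℝ)+2)) y, ‖u x^2‖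
        = ∫ x in Ioc (y/((n:ℝ)+2)) y, u x^2 :=
      setIntegral_congr_fun measurableSet_Ioc (fun x _ => Real.norm_of_nonneg (sq_nonneg _))
    rw [heq]
    exact hmain _ (hεn n).1 (hεn n).2
  have hint0y : IntegrableOn (fun x => u x^2) (Ioc 0 y) volume :=
    integrableOn_Ioc_of_intervalIntegral_norm_bounded_left hintn htend
      (Eventually.of_forall hboundn)
  have hsetseq : (⋃ n : ℕ, Ioc (y/((n:ℝ)+2)) y) = Ioc 0 y := by
    ext x
    simp only [mem_iUnion, mem_Ioc]
    constructor
    · rintro ⟨n, hn1, hn2⟩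
      exact ⟨lt_trans (hεn n).1 hn1, hn2⟩
    · rintro ⟨hx1, hx2⟩
      obtain ⟨n, hn⟩ := exists_nat_gt (y/x)
      refine ⟨n, ?_, hx2⟩
      rw [div_lt_iff₀ (by positivity)]
      rw [div_lt_iff₀ hx1] at hn
      nlinarith
  have hmono : Monotone (fun n : ℕ => Ioc (y/((n:ℝ)+2)) y) := by
    intro n1 n2 hn
    apply Ioc_subset_Ioc_left
    have hcast : ((n1:ℝ)+2) ≤ ((n2:ℝ)+2) := by
      have := (Nat.cast_le (α := ℝ)).2 hn
      linarith
    gcongr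
  have htendInt := tendsto_setIntegral_of_monotone (fun n : ℕ => measurableSet_Ioc) hmono
      (by rw [hsetseq]; exact hint0y)
  rw [hsetseq] at htendInt
  have hIoc0bound : ∫ x in Ioc 0 y, u x^2 ≤ K₀ := by
    refine le_of_tendsto htendInt (Eventually.of_forall fun n => ?_)
    exact hmain _ (hεn n).1 (hεn n).2
  -- combine both regions
  have hrintIoiy : IntegrableOn (fun x => u x^2) (Ioi y) volume :=
    hrint2.mono_set (Ioi_subset_Ioi hy1)
  have hsplitset : Ioc (0:ℝ) y ∪ Ioi y = Ioi 0 := Ioc_union_Ioi_eq_Ioi hypos.le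
  have hIoiInt : IntegrableOn (fun x => u x^2) (Ioi 0) volume := by
    rw [← hsplitset]; exact hint0y.union hrintIoiy
  have hIoiyBound : ∫ x in Ioi y, u x^2 ≤ m₃⁻¹^2 * Asq := by
    refine le_trans ?_ hJbound
    exact setIntegral_mono_set hrint2 (ae_of_all _ fun x => sq_nonneg _)
      (Ioi_subset_Ioi hy1).eventuallyLE
  have htotal : ∫ x in Ioi (0:ℝ), u x^2 ≤ K * (Bsq + Asq) := by
    have hsum : ∫ x in Ioi (0:ℝ), u x^2
        = (∫ x in Ioc 0 y, u x^2) + ∫ x in Ioi y, u x^2 := by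
      rw [← hsplitset,
        setIntegral_union (Ioc_disjoint_Ioi le_rfl) measurableSet_Ioi hint0y hrintIoiy]
    have e1 : K₀ = 4*I + 4*(c^2*Bsq) := hK₀_def
    rw [hsum, hK_def]
    nlinarith [hIA, hAsq0, hBsq0, hIoc0bound, hIoiyBound,
      mul_nonneg (sq_nonneg c) hAsq0, mul_nonneg (sq_nonneg m₃⁻¹) hBsq0]
  -- conclusion
  have hmem : MemLp u 2 (volume.restrict (Ioi 0)) := (memLp_two_iff_integrable_sq hum).2 hIoiInt
  refine ⟨hmem, ?_⟩
  rw [hmem.eLpNorm_eq_integral_rpow_norm two_ne_zero ENNReal.ofNat_ne_top,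
      hg1.eLpNorm_eq_integral_rpow_norm two_ne_zero ENNReal.ofNat_ne_top,
      hg2.eLpNorm_eq_integral_rpow_norm two_ne_zero ENNReal.ofNat_ne_top]
  have htr : ((2:ℝ≥0∞).toReal) = (2:ℝ) := by norm_num
  rw [htr]
  have hIu : (∫ a in Ioi (0:ℝ), ‖u a‖ ^ (2:ℝ)) = ∫ x in Ioi (0:ℝ), u x^2 := by
    refine integral_congr_ae (ae_of_all _ fun x => ?_)
    simp only [Real.rpow_two, Real.norm_eq_abs, sq_abs]
  have hIg1 : (∫ a in Ioi (0:ℝ), ‖h a * deriv u a‖ ^ (2:ℝ)) = Bsq := by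
    refine integral_congr_ae (ae_of_all _ fun x => ?_)
    simp only [Real.rpow_two, Real.norm_eq_abs, sq_abs]
  have hIg2 : (∫ a in Ioi (0:ℝ), ‖h a ^ σ₁ * u a‖ ^ (2:ℝ)) = Asq := by
    refine integral_congr_ae (ae_of_all _ fun x => ?_)
    simp only [Real.rpow_two, Real.norm_eq_abs, sq_abs]
  rw [hIu, hIg1, hIg2, show ((2:ℝ))⁻¹ = 1/2 by norm_num,
    ← Real.sqrt_eq_rpow, ← Real.sqrt_eq_rpow, ← Real.sqrt_eq_rpow,
    ← ENNReal.ofReal_add (Real.sqrt_nonneg _) (Real.sqrt_nonneg _),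
    ← ENNReal.ofReal_mul (Real.sqrt_nonneg _)]
  apply ENNReal.ofReal_le_ofReal
  have h3 : Real.sqrt (Bsq + Asq) ≤ Real.sqrt Bsq + Real.sqrt Asq := by
    have h4 : Bsq + Asq ≤ (Real.sqrt Bsq + Real.sqrt Asq)^2 := by
      nlinarith [Real.sq_sqrt hBsq0, Real.sq_sqrt hAsq0,
        Real.sqrt_nonneg Bsq, Real.sqrt_nonneg Asq]
    calc Real.sqrt (Bsq + Asq) ≤ Real.sqrt ((Real.sqrt Bsq + Real.sqrt Asq)^2) :=
          Real.sqrt_le_sqrt h4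
      _ = Real.sqrt Bsq + Real.sqrt Asq := Real.sqrt_sq (by positivity)
  calc Real.sqrt (∫ x in Ioi (0:ℝ), u x^2)
      ≤ Real.sqrt (K * (Bsq + Asq)) := Real.sqrt_le_sqrt htotal
    _ = Real.sqrt K * Real.sqrt (Bsq + Asq) := Real.sqrt_mul hKpos.le _
    _ ≤ Real.sqrt K * (Real.sqrt Bsq + Real.sqrt Asq) :=
        mul_le_mul_of_nonneg_left h3 (Real.sqrt_nonneg K)
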